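/- arXiv:1501.02239 — 4 statements merged into one kernel-verified Lean document; each statement's English description precedes it below -/
import Mathlib

section
/- Let P be a finite poset on V and A ⊆ V an antichain of P. Then contracting A (collapsing A to a single element, blocks of π_A being A and singletons) yields an acyclic preposet, i.e., the quotient preorder on π_A is a partial order. -/
/-- One step of the quotient preorder on the blocks of a partition `π`. -/
def blockStep {V : Type*} (P : PartialOrder V) (π : Set (Set V)) (B B' : Set V) : Prop :=
  B ∈ π ∧ B' ∈ π ∧ ∃ x ∈ B, ∃ y ∈ B', P.le x y

/-- The quotient preorder on blocks: the transitive closure of `blockStep`. -/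
def blockLe {V : Type*} (P : PartialOrder V) (π : Set (Set V)) : Set V → Set V → Prop :=
  Relation.TransGen (blockStep P π)

/-- The partition `π_S` of `V` whose blocks are `S` and the singletons `{v}`, `v ∉ S`. -/
def piS {V : Type*} (S : Set V) : Set (Set V) :=
  insert S {B | ∃ v, v ∉ S ∧ B = ({v} : Set V)}

/-- Contracting an antichain A of a finite poset P yields an acyclic
(antisymmetric) quotient preorder on the partition π_A. -/
theorem stmt_6 (V : Type) [Fintype V] (P : PartialOrder V) (A : Set V)
    (hA : ∀ x ∈ A, ∀ y ∈ A, x ≠ y → ¬ P.le x y ∧ ¬ P.le y x) :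
    ∀ B B', blockLe P (piS A) B B' → blockLe P (piS A) B' B → B = B' := by
  have hanti : ∀ a ∈ A, ∀ b ∈ A, P.le a b → a = b := by
    intro a ha b hb hle
    by_contra hne
    exact (hA a ha b hb hne).1 hle
  have hmem : ∀ B, B ∈ piS A → B = A ∨ ∃ v, v ∉ A ∧ B = ({v} : Set V) := by
    intro B hB
    rcases hB with h | h
    · exact Or.inl h
    · exact Or.inr h
  set R : Set V → Set V → Prop := fun B B' =>
    B ∈ piS A ∧ B' ∈ piS A ∧
      ((∃ x ∈ B, ∃ y ∈ B', P.le x y) ∨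
       ((∃ x ∈ B, ∃ a ∈ A, P.le x a) ∧ (∃ a ∈ A, ∃ y ∈ B', P.le a y))) with hRdef
  have hstep : ∀ B B', blockStep P (piS A) B B' → R B B' := by
    rintro B B' ⟨hB, hB', hxy⟩
    exact ⟨hB, hB', Or.inl hxy⟩
  have htrans : ∀ B C B', R B C → R C B' → R B B' := by
    rintro B C B' ⟨hB, hC, h1⟩ ⟨-, hB', h2⟩
    refine ⟨hB, hB', ?_⟩
    rcases hmem C hC with hCA | ⟨v, hv, hCv⟩
    · -- C = A : compose through A
      rw [hCA] at h1 h2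
      have hL : ∃ x ∈ B, ∃ a ∈ A, P.le x a := by
        rcases h1 with ⟨x, hx, y, hy, hxy⟩ | ⟨hL, _⟩
        · exact ⟨x, hx, y, hy, hxy⟩
        · exact hL
      have hRt : ∃ a ∈ A, ∃ y ∈ B', P.le a y := by
        rcases h2 with ⟨x, hx, y, hy, hxy⟩ | ⟨_, hRt⟩
        · exact ⟨x, hx, y, hy, hxy⟩
        · exact hRt
      exact Or.inr ⟨hL, hRt⟩
    · -- C = {v}
      rw [hCv] at h1 h2
      rcases h1 with ⟨x, hx, y, hy, hxy⟩ | ⟨hL, a, ha, y, hy, hay⟩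
      · rw [Set.mem_singleton_iff] at hy
        rw [hy] at hxy
        rcases h2 with ⟨y', hy', z, hz, hyz⟩ | ⟨⟨y', hy', a, ha, hya⟩, hRt⟩
        · rw [Set.mem_singleton_iff] at hy'
          rw [hy'] at hyz
          exact Or.inl ⟨x, hx, z, hz, P.le_trans _ _ _ hxy hyz⟩
        · rw [Set.mem_singleton_iff] at hy'
          rw [hy'] at hya
          exact Or.inr ⟨⟨x, hx, a, ha, P.le_trans _ _ _ hxy hya⟩, hRt⟩
      · rw [Set.mem_singleton_iff] at hy
        rw [hy] at hay
        have hRt : ∃ a ∈ A, ∃ z ∈ B', P.le a z := by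
          rcases h2 with ⟨y', hy', z, hz, hyz⟩ | ⟨_, hRt⟩
          · rw [Set.mem_singleton_iff] at hy'
            rw [hy'] at hyz
            exact ⟨a, ha, z, hz, P.le_trans _ _ _ hay hyz⟩
          · exact hRt
        exact Or.inr ⟨hL, hRt⟩
  have hmain : ∀ B B', blockLe P (piS A) B B' → R B B' := by
    intro B B' h
    induction h with
    | single h => exact hstep _ _ h
    | tail _ h2 ih => exact htrans _ _ _ ih (hstep _ _ h2)
  intro B B' h1 h2
  obtain ⟨hB, hB', hbb'⟩ := hmain _ _ h1
  obtain ⟨-, -, hb'b⟩ := hmain _ _ h2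
  rcases hmem B hB with hBA | ⟨u, hu, hBu⟩
  · rcases hmem B' hB' with hB'A | ⟨v, hv, hB'v⟩
    · rw [hBA, hB'A]
    · -- B = A, B' = {v}
      exfalso
      rw [hBA, hB'v] at hbb' hb'b
      have h₁ : ∃ a ∈ A, P.le a v := by
        rcases hbb' with ⟨a, ha, y, hy, h⟩ | ⟨_, a, ha, y, hy, h⟩ <;>
          rw [Set.mem_singleton_iff] at hy <;> rw [hy] at h <;> exact ⟨a, ha, h⟩
      have h₂ : ∃ b ∈ A, P.le v b := by
        rcases hb'b with ⟨y, hy, b, hb, h⟩ | ⟨⟨y, hy, b, hb, h⟩, _⟩ <;>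
          rw [Set.mem_singleton_iff] at hy <;> rw [hy] at h <;> exact ⟨b, hb, h⟩
      obtain ⟨a, ha, hav⟩ := h₁
      obtain ⟨b, hb, hvb⟩ := h₂
      have hab : a = b := hanti a ha b hb (P.le_trans _ _ _ hav hvb)
      rw [hab] at hav
      have : v = b := P.le_antisymm _ _ hvb hav
      exact hv (this ▸ hb)
  · rcases hmem B' hB' with hB'A | ⟨v, hv, hB'v⟩
    · -- B = {u}, B' = A
      exfalso
      rw [hBu, hB'A] at hbb' hb'b
      have h₁ : ∃ a ∈ A, P.le a u := by
        rcases hb'b with ⟨a, ha, y, hy, h⟩ | ⟨_, a, ha, y, hy, h⟩ <;>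
          rw [Set.mem_singleton_iff] at hy <;> rw [hy] at h <;> exact ⟨a, ha, h⟩
      have h₂ : ∃ b ∈ A, P.le u b := by
        rcases hbb' with ⟨y, hy, b, hb, h⟩ | ⟨⟨y, hy, b, hb, h⟩, _⟩ <;>
          rw [Set.mem_singleton_iff] at hy <;> rw [hy] at h <;> exact ⟨b, hb, h⟩
      obtain ⟨a, ha, hau⟩ := h₁
      obtain ⟨b, hb, hub⟩ := h₂
      have hab : a = b := hanti a ha b hb (P.le_trans _ _ _ hau hub)
      rw [hab] at hau
      have : u = b := P.le_antisymm _ _ hub hau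
      exact hu (this ▸ hb)
    · -- both singletons
      rw [hBu, hB'v] at hbb' hb'b
      rcases hbb' with ⟨x, hx, y, hy, huv⟩ | ⟨⟨x, hx, a, ha, hua⟩, b, hb, y, hy, hbv⟩
      · rw [Set.mem_singleton_iff] at hx hy
        rw [hx, hy] at huv
        rcases hb'b with ⟨x', hx', y', hy', hvu⟩ | ⟨⟨x', hx', c, hc, hvc⟩, d, hd, y', hy', hdu⟩
        · rw [Set.mem_singleton_iff] at hx' hy'
          rw [hx', hy'] at hvu
          rw [hBu, hB'v, P.le_antisymm _ _ huv hvu]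
        · rw [Set.mem_singleton_iff] at hx' hy'
          rw [hx'] at hvc; rw [hy'] at hdu
          exfalso
          have hdc : d = c := hanti d hd c hc
            (P.le_trans _ _ _ (P.le_trans _ _ _ hdu huv) hvc)
          rw [hdc] at hdu
          have : v = c := P.le_antisymm _ _ hvc (P.le_trans _ _ _ hdu huv)
          exact hv (this ▸ hc)
      · rw [Set.mem_singleton_iff] at hx hy
        rw [hx] at hua; rw [hy] at hbv
        rcases hb'b with ⟨x', hx', y', hy', hvu⟩ | ⟨⟨x', hx', c, hc, hvc⟩, d, hd, y', hy', hdu⟩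
        · rw [Set.mem_singleton_iff] at hx' hy'
          rw [hx', hy'] at hvu
          exfalso
          have hba : b = a := hanti b hb a ha
            (P.le_trans _ _ _ (P.le_trans _ _ _ hbv hvu) hua)
          rw [hba] at hbv
          have : u = a := P.le_antisymm _ _ hua (P.le_trans _ _ _ hbv hvu)
          exact hu (this ▸ ha)
        · rw [Set.mem_singleton_iff] at hx' hy'
          rw [hx'] at hvc; rw [hy'] at hdu
          exfalso
          have hbc : b = c := hanti b hb c hc (P.le_trans _ _ _ hbv hvc)
          rw [hbc] at hbv
          have : v = c := P.le_antisymm _ _ hvc hbv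
          exact hv (this ▸ hc)
end

section
/- Let G = (V,E) be a finite graph with acyclic orientation ω, and let I be an order ideal of the poset P(G, ω) (the transitive closure of ω). Then there exists an acyclic orientation ω'' obtained from ω by a sequence of source-to-sink flips such that I is an order filter of P(G, ω''). -/
/-- A directed cycle (closed directed walk with at least one edge). -/
def HasCycle {α : Type*} (r : α → α → Prop) : Prop :=
  ∃ (n : ℕ) (f : Fin (n + 1) → α),
    (∀ i : Fin n, r (f i.castSucc) (f i.succ)) ∧ r (f (Fin.last n)) (f 0)

/-- `r` is an orientation of the simple graph `G`: each edge gets exactly one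
direction. -/
def IsOrientation {V : Type*} (G : SimpleGraph V) (r : V → V → Prop) : Prop :=
  (∀ i j : V, G.Adj i j ↔ (r i j ∨ r j i)) ∧ ∀ i j : V, r i j → ¬ r j i

/-- The orientation obtained from `r` by reversing all edges incident to `v`. -/
def flipAt {V : Type*} (r : V → V → Prop) (v : V) : V → V → Prop :=
  fun i j => ((i = v ∨ j = v) ∧ r j i) ∨ (¬(i = v ∨ j = v) ∧ r i j)

/-- A single source-to-sink flipAt: flipping at a source vertex. -/
def FlipStep {V : Type*} (r r' : V → V → Prop) : Prop :=
  ∃ v : V, (∀ u : V, ¬ r u v) ∧ r' = flipAt r v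

/-- Toric equivalence: generated by source-to-sink flips. -/
def ToricEquiv {V : Type*} (r r' : V → V → Prop) : Prop :=
  Relation.ReflTransGen FlipStep r r'

/-- `I` is an order ideal (down-closed set) of the reachability poset of `r`. -/
def IsIdealOf {V : Type*} (r : V → V → Prop) (I : Set V) : Prop :=
  ∀ x y : V, Relation.ReflTransGen r x y → y ∈ I → x ∈ I

/-- `J` is an order filter (up-closed set) of the reachability poset of `r`. -/
def IsFilterOf {V : Type*} (r : V → V → Prop) (J : Set V) : Prop :=
  ∀ x y : V, Relation.ReflTransGen r x y → x ∈ J → y ∈ J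

open Classical in
noncomputable def swapSet {V : Type*} (r : V → V → Prop) (I : Set V) : V → V → Prop :=
  fun x y => if ((x ∈ I) ↔ (y ∈ I)) then r x y else r y x

lemma reflTransGen_toFin {V : Type*} {r : V → V → Prop} {x z : V}
    (h : Relation.ReflTransGen r x z) :
    ∃ (n : ℕ) (f : Fin (n+1) → V), f 0 = x ∧ f (Fin.last n) = z ∧
      ∀ i : Fin n, r (f i.castSucc) (f i.succ) := by
  induction h with
  | refl => exact ⟨0, fun _ => x, rfl, rfl, fun i => i.elim0⟩
  | @tail b c hab hbc ih =>
    obtain ⟨n, f, h0, hl, he⟩ := ih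
    refine ⟨n+1, Fin.snoc f c, ?_, ?_, ?_⟩
    · rw [show (0 : Fin (n+2)) = Fin.castSucc 0 by rfl, Fin.snoc_castSucc, h0]
    · simp
    · intro i
      refine Fin.lastCases ?_ ?_ i
      · rw [Fin.succ_last]
        simp [Fin.snoc_castSucc, hl, hbc]
      · intro j
        have h2 : (j.castSucc).succ = Fin.castSucc j.succ := by
          simp [Fin.ext_iff]
        rw [h2, Fin.snoc_castSucc, Fin.snoc_castSucc]
        exact he j

lemma transGen_irrefl {V : Type*} {r : V → V → Prop} (hacyc : ¬ HasCycle r) :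
    ∀ x, ¬ Relation.TransGen r x x := by
  intro x hx
  obtain ⟨z, hxz, hzx⟩ := Relation.TransGen.tail'_iff.mp hx
  obtain ⟨n, f, h0, hl, he⟩ := reflTransGen_toFin hxz
  exact hacyc ⟨n, f, he, by rw [h0, hl]; exact hzx⟩

lemma ideal_of_step {V : Type*} {r : V → V → Prop} {I : Set V}
    (h : ∀ x y, r x y → y ∈ I → x ∈ I) : IsIdealOf r I := by
  intro x y hxy hy
  induction hxy with
  | refl => exact hy
  | @tail b c hab hbc ih => exact ih (h b c hbc hy)

lemma filter_of_step {V : Type*} {r : V → V → Prop} {J : Set V}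
    (h : ∀ x y, r x y → x ∈ J → y ∈ J) : IsFilterOf r J := by
  intro x y hxy hx
  induction hxy with
  | refl => exact hx
  | @tail b c _ hbc ih => exact h b c hbc ih

lemma acyclic_flip {V : Type*} {r : V → V → Prop} {v : V}
    (hacyc : ¬ HasCycle r) (hv : ∀ u, ¬ r u v) : ¬ HasCycle (flipAt r v) := by
  rintro ⟨n, f, he, hw⟩
  have hvsink : ∀ w, ¬ flipAt r v v w := by
    rintro w (⟨_, hrv⟩ | ⟨hn, _⟩)
    · exact hv w hrv
    · exact hn (Or.inl rfl)
  have hne : ∀ j : Fin (n+1), f j ≠ v := by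
    intro j hj
    refine Fin.lastCases ?_ ?_ j hj
    · intro hj; exact hvsink (f 0) (hj ▸ hw)
    · intro i hj; exact hvsink (f i.succ) (hj ▸ he i)
  have conv : ∀ a b : Fin (n+1), flipAt r v (f a) (f b) → r (f a) (f b) := by
    intro a b hab
    rcases hab with ⟨(ha | hb), _⟩ | ⟨_, hr⟩
    · exact absurd ha (hne a)
    · exact absurd hb (hne b)
    · exact hr
  exact hacyc ⟨n, f, fun i => conv _ _ (he i), conv _ _ hw⟩

lemma toric_swap {V : Type*} [Fintype V] :
    ∀ (n : ℕ) (r : V → V → Prop) (I : Set V), I.ncard ≤ n → ¬ HasCycle r →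
      (∀ x y, r x y → y ∈ I → x ∈ I) → ToricEquiv r (swapSet r I) := by
  intro n
  induction n with
  | zero =>
    intro r I hc hacyc hid
    have hIe : I = ∅ := by
      rwa [Nat.le_zero, Set.ncard_eq_zero (Set.toFinite I)] at hc
    have hs : swapSet r I = r := by
      funext x y; simp [swapSet, hIe]
    rw [hs]; exact Relation.ReflTransGen.refl
  | succ n ih =>
    intro r I hc hacyc hid
    by_cases hIe : I = ∅
    · have hs : swapSet r I = r := by
        funext x y; simp [swapSet, hIe]
      rw [hs]; exact Relation.ReflTransGen.refl
    · have hwf : WellFounded (fun a b : V => Relation.TransGen r a b) := by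
        have h1 : IsTrans V (fun a b => Relation.TransGen r a b) :=
          ⟨fun a b c => Relation.TransGen.trans⟩
        have h2 : IsIrrefl V (fun a b => Relation.TransGen r a b) :=
          ⟨transGen_irrefl hacyc⟩
        exact Finite.wellFounded_of_trans_of_irrefl _
      obtain ⟨v, hvI, hmin⟩ := hwf.has_min I (Set.nonempty_iff_ne_empty.mpr hIe)
      have hsrc : ∀ u, ¬ r u v := fun u hu =>
        hmin u (hid u v hu hvI) (Relation.TransGen.single hu)
      have hstep : FlipStep r (flipAt r v) := ⟨v, hsrc, rfl⟩
      have hacyc' : ¬ HasCycle (flipAt r v) := acyclic_flip hacyc hsrc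
      have hid' : ∀ x y, flipAt r v x y → y ∈ I \ {v} → x ∈ I \ {v} := by
        rintro x y hxy ⟨hyI, hyv⟩
        rcases hxy with ⟨(hx | hy), hr⟩ | ⟨hn, hr⟩
        · exact absurd (hx ▸ hr) (hsrc y)
        · exact absurd hy hyv
        · exact ⟨hid x y hr hyI, fun hx => hn (Or.inl hx)⟩
      have hcard : (I \ {v}).ncard ≤ n := by
        have := Set.ncard_diff_singleton_lt_of_mem hvI (Set.toFinite I)
        omega
      have hIH := ih (flipAt r v) (I \ {v}) hcard hacyc' hid'
      have hswap : swapSet (flipAt r v) (I \ {v}) = swapSet r I := by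
        have hvI' : v ∉ I \ {v} := fun h => h.2 rfl
        have flipL : ∀ y, flipAt r v v y = r y v := fun y =>
          propext (by simp [flipAt])
        have flipR : ∀ x, flipAt r v x v = r v x := fun x =>
          propext (by by_cases hx : x = v <;> simp [flipAt, hx])
        have flipN : ∀ x y, x ≠ v → y ≠ v → flipAt r v x y = r x y :=
          fun x y hx hy => propext (by simp [flipAt, hx, hy])
        funext x y
        by_cases hx : x = v
        · by_cases hy : y = v
          · simp [swapSet, hx, hy, flipL]
          · by_cases hyI : y ∈ I
            · simp [swapSet, hx, hvI', hyI, hy, hvI, flipR]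
            · simp [swapSet, hx, hvI', hyI, hy, hvI, flipL]
        · by_cases hy : y = v
          · by_cases hxI : x ∈ I
            · simp [swapSet, hy, hvI', hxI, hx, hvI, flipL]
            · simp [swapSet, hy, hvI', hxI, hx, hvI, flipR]
          · by_cases hxI : x ∈ I <;> by_cases hyI : y ∈ I <;>
              simp [swapSet, hx, hy, hxI, hyI, flipN x y hx hy, flipN y x hy hx]
      rw [hswap] at hIH
      exact Relation.ReflTransGen.head hstep hIH


/-- If I is an order ideal of the reachability poset P(G,ω) of an acyclic
orientation ω, then some ω'' obtained from ω by a sequence of source-to-sink flips has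
I as an order filter of P(G,ω''). -/
theorem stmt_9 (V : Type) [Fintype V] (G : SimpleGraph V) (r : V → V → Prop)
    (hor : IsOrientation G r) (hacyc : ¬ HasCycle r) (I : Set V) (hI : IsIdealOf r I) :
    ∃ r'' : V → V → Prop, ToricEquiv r r'' ∧ IsFilterOf r'' I := by
  refine ⟨swapSet r I, toric_swap I.ncard r I le_rfl hacyc
    (fun x y h hy => hI x y (Relation.ReflTransGen.single h) hy), ?_⟩
  apply filter_of_step
  intro x y hxy hx
  by_cases hy : y ∈ I
  · exact hy
  · exfalso
    have hr : r y x := by simpa [swapSet, hx, hy] using hxy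
    exact hy (hI y x (Relation.ReflTransGen.single hr) hx)
end

section
/- Let G be a finite graph and ω an acyclic orientation. Define the set of toric filters of P(G,[ω]) as those subsets J ⊆ V that are order ideals of P(G, ω') for some ω' obtained from ω by source-to-sink flips. Then the poset of toric filters of P(G,[ω]) ordered by inclusion is graded by cardinality: every nonempty toric filter J contains a toric filter J' with |J'| = |J| − 1. -/
/-- `J` is a toric filter of `P(G,[ω])`: it is an order ideal of `P(G,ω')` for some
`ω'` obtained from `ω` by source-to-sink flips. -/
def IsToricFilter {V : Type*} (r : V → V → Prop) (J : Set V) : Prop :=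
  ∃ r' : V → V → Prop, ToricEquiv r r' ∧ IsIdealOf r' J

/-- From a `TransGen` chain we can extract an explicit finite directed walk. -/
lemma transGen_toChain {α : Type*} {r : α → α → Prop} {a b : α}
    (h : Relation.TransGen r a b) :
    ∃ (n : ℕ) (f : Fin (n + 1) → α), f 0 = a ∧
      (∀ i : Fin n, r (f i.castSucc) (f i.succ)) ∧ r (f (Fin.last n)) b := by
  induction h with
  | single hab => exact ⟨0, fun _ => a, rfl, fun i => i.elim0, hab⟩
  | @tail b c _ hbc ih =>
    obtain ⟨n, f, hf0, hstep, hlast⟩ := ih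
    refine ⟨n + 1, Fin.snoc f b, by simpa [Fin.snoc] using hf0, ?_, by simpa using hbc⟩
    intro i
    rcases Fin.eq_castSucc_or_eq_last i with ⟨j, rfl⟩ | rfl
    · rw [Fin.succ_castSucc]
      exact (by simpa only [Fin.snoc_castSucc] using hstep j :
        r (Fin.snoc (α := fun _ => α) f b j.castSucc.castSucc)
          (Fin.snoc (α := fun _ => α) f b j.succ.castSucc))
    · have : (Fin.last n).succ = Fin.last (n + 1) := rfl
      rw [this]
      simpa using hlast

lemma hasCycle_of_transGen {α : Type*} {r : α → α → Prop} {a : α}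
    (h : Relation.TransGen r a a) : HasCycle r := by
  obtain ⟨n, f, hf0, hstep, hlast⟩ := transGen_toChain h
  exact ⟨n, f, hstep, by rwa [hf0]⟩

/-- Flipping at a source preserves acyclicity. -/
lemma flipAt_acyclic {V : Type*} {r : V → V → Prop} {v : V}
    (hsrc : ∀ u : V, ¬ r u v) (hacyc : ¬ HasCycle r) : ¬ HasCycle (flipAt r v) := by
  rintro ⟨n, f, hstep, hlast⟩
  -- v is a sink in the flipped orientation
  have hsink : ∀ j, ¬ flipAt r v v j := by
    rintro j (⟨_, hj⟩ | ⟨hne, _⟩)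
    · exact hsrc j hj
    · exact hne (Or.inl rfl)
  by_cases hv : ∃ k : Fin (n + 1), f k = v
  · obtain ⟨k, hk⟩ := hv
    rcases Fin.eq_castSucc_or_eq_last k with ⟨j, rfl⟩ | rfl
    · exact hsink _ (hk ▸ hstep j)
    · exact hsink _ (hk ▸ hlast)
  · push_neg at hv
    apply hacyc
    refine ⟨n, f, fun i => ?_, ?_⟩
    · rcases hstep i with ⟨h1, h2⟩ | ⟨_, h2⟩
      · rcases h1 with h1 | h1 <;> [exact absurd h1 (hv _); exact absurd h1 (hv _)]
      · exact h2
    · rcases hlast with ⟨h1, h2⟩ | ⟨_, h2⟩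
      · rcases h1 with h1 | h1 <;> [exact absurd h1 (hv _); exact absurd h1 (hv _)]
      · exact h2

lemma toricEquiv_acyclic {V : Type*} {r r' : V → V → Prop}
    (h : ToricEquiv r r') (hacyc : ¬ HasCycle r) : ¬ HasCycle r' := by
  induction h with
  | refl => exact hacyc
  | tail _ hstep ih =>
    obtain ⟨v, hsrc, rfl⟩ := hstep
    exact flipAt_acyclic hsrc ih

/-- The poset of toric filters of P(G,[ω]) ordered by inclusion is graded
by cardinality: every nonempty toric filter J contains a toric filter J' of
cardinality |J| − 1. -/
theorem stmt_11 (V : Type) [Fintype V] (G : SimpleGraph V) (r : V → V → Prop)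
    (hor : IsOrientation G r) (hacyc : ¬ HasCycle r) (J : Set V)
    (hJ : IsToricFilter r J) (hne : J.Nonempty) :
    ∃ J' : Set V, J' ⊆ J ∧ IsToricFilter r J' ∧ Nat.card J' = Nat.card J - 1 := by
  obtain ⟨r', hequiv, hideal⟩ := hJ
  have hacyc' : ¬ HasCycle r' := toricEquiv_acyclic hequiv hacyc
  -- the reversed transitive closure is well-founded
  have hirr : ∀ a : V, ¬ Relation.TransGen r' a a := fun a h =>
    hacyc' (hasCycle_of_transGen h)
  have hwf : WellFounded (fun a b : V => Relation.TransGen r' b a) := by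
    have : IsTrans V (fun a b : V => Relation.TransGen r' b a) :=
      ⟨fun a b c hab hbc => Relation.TransGen.trans hbc hab⟩
    have : IsIrrefl V (fun a b : V => Relation.TransGen r' b a) := ⟨hirr⟩
    exact Finite.wellFounded_of_trans_of_irrefl _
  obtain ⟨m, hmJ, hmax⟩ := hwf.has_min J hne
  refine ⟨J \ {m}, Set.diff_subset, ⟨r', hequiv, ?_⟩, ?_⟩
  · intro x y hxy hy
    obtain ⟨hyJ, hym⟩ := hy
    refine ⟨hideal x y hxy hyJ, ?_⟩
    rintro rfl
    rcases Relation.reflTransGen_iff_eq_or_transGen.mp hxy with rfl | htg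
    · exact hym rfl
    · exact hmax y hyJ htg
  · rw [Nat.card_coe_set_eq, Nat.card_coe_set_eq,
      Set.ncard_diff_singleton_of_mem hmJ]
end

section
/- Let G = (V,E) be a finite graph and ω, ω' torically equivalent acyclic orientations (related by a sequence of source-to-sink flips). If i₁ → i₂ → ⋯ → i_m is a toric directed path in ω (a directed path such that the edge i₁ → i_m is also present), then ω' contains a toric directed path j₁ → ⋯ → j_m where (j₁, …, j_m) is a cyclic shift of (i₁, …, i_m). -/
def ToricPath' {V : Type*} (r : V → V → Prop) {m : ℕ} (f : Fin (m + 1) → V) : Prop :=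
  (∀ i : Fin m, r (f i.castSucc) (f i.succ)) ∧ r (f 0) (f (Fin.last m))

lemma flip_step_lemma {V : Type*} {r r' : V → V → Prop} (h : FlipStep r r')
    {m : ℕ} {f : Fin (m + 1) → V} (hp : ToricPath' r f) :
    ∃ k : Fin (m + 1), ToricPath' r' (fun i => f (i + k)) := by
  obtain ⟨hpath, hclose⟩ := hp
  obtain ⟨v, hsrc, rfl⟩ := h
  by_cases hv : ∃ p : Fin (m + 1), f p = v
  · obtain ⟨p, hpv⟩ := hv
    have hzero : ∀ q : Fin (m + 1), f q = v → q = 0 := by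
      intro q hq
      by_contra hne
      have h1 : 1 ≤ q.val := Nat.one_le_iff_ne_zero.mpr (fun h0 => hne (Fin.ext h0))
      have h2 : q.val - 1 < m := by have := q.isLt; omega
      have hsucc : (⟨q.val - 1, h2⟩ : Fin m).succ = q := by
        apply Fin.ext; simp [Fin.succ]; omega
      have := hpath ⟨q.val - 1, h2⟩
      rw [hsucc, hq] at this
      exact hsrc _ this
    have hp0 : p = 0 := hzero p hpv
    subst hp0
    have hm : m ≠ 0 := by
      intro hm0
      subst hm0
      have hl : (Fin.last 0 : Fin 1) = 0 := rfl
      rw [hl] at hclose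
      rw [hpv] at hclose
      exact hsrc _ hclose
    obtain ⟨n, rfl⟩ : ∃ n, m = n + 1 := ⟨m - 1, by omega⟩
    refine ⟨1, ?_, ?_⟩
    · intro i
      simp only
      by_cases hi : i.val + 1 < n + 1
      · -- interior edge, shifted index j = i+1
        have e1 : i.castSucc + 1 = (⟨i.val + 1, hi⟩ : Fin (n + 1)).castSucc := by
          apply Fin.ext
          simp [Fin.val_add, Nat.mod_eq_of_lt (by omega : i.val + 1 < n + 2)]
        have e2 : i.succ + 1 = (⟨i.val + 1, hi⟩ : Fin (n + 1)).succ := by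
          apply Fin.ext
          simp [Fin.val_add, Nat.mod_eq_of_lt (by omega : i.val + 1 + 1 < n + 2)]
        rw [e1, e2]
        refine Or.inr ⟨?_, hpath _⟩
        push_neg
        constructor
        · intro hc
          have := hzero _ hc
          rw [Fin.ext_iff] at this
          simp at this
        · intro hc
          have := hzero _ hc
          rw [Fin.ext_iff] at this
          simp [Fin.succ] at this
      · -- wrap-around edge: i.val = n
        have hin : i.val = n := by have := i.isLt; omega
        have e1 : i.castSucc + 1 = Fin.last (n + 1) := by
          apply Fin.ext
          simp [Fin.val_add, hin, Nat.mod_eq_of_lt (by omega : n + 1 < n + 2)]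
        have e2 : i.succ + 1 = (0 : Fin (n + 2)) := by
          apply Fin.ext
          simp [Fin.val_add, Fin.succ, hin]
        rw [e1, e2]
        exact Or.inl ⟨Or.inr hpv, hclose⟩
    · simp only
      have e1 : (0 : Fin (n + 2)) + 1 = (⟨0, Nat.succ_pos n⟩ : Fin (n + 1)).succ := by
        apply Fin.ext; simp
      have e2 : Fin.last (n + 1) + 1 = (0 : Fin (n + 2)) := by
        apply Fin.ext; simp [Fin.val_add]
      rw [e1, e2]
      have h0 : r (f (⟨0, Nat.succ_pos n⟩ : Fin (n + 1)).castSucc) (f (⟨0, Nat.succ_pos n⟩ : Fin (n + 1)).succ) := hpath _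
      have hc0 : (⟨0, Nat.succ_pos n⟩ : Fin (n + 1)).castSucc = (0 : Fin (n + 2)) := rfl
      rw [hc0] at h0
      exact Or.inl ⟨Or.inr hpv, h0⟩
  · push_neg at hv
    refine ⟨0, ?_, ?_⟩
    · intro i
      simp only [add_zero]
      exact Or.inr ⟨by push_neg; exact ⟨hv _, hv _⟩, hpath i⟩
    · simp only [add_zero]
      exact Or.inr ⟨by push_neg; exact ⟨hv _, hv _⟩, hclose⟩

lemma toric_key {V : Type*} {m : ℕ} (f : Fin (m + 1) → V) {s s' : V → V → Prop}
    (h : Relation.ReflTransGen FlipStep s s') (hp : ToricPath' s f) :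
    ∃ k : Fin (m + 1), ToricPath' s' (fun i => f (i + k)) := by
  induction h with
  | refl =>
      refine ⟨0, ?_, ?_⟩
      · intro i; simp only [add_zero]; exact hp.1 i
      · simp only [add_zero]; exact hp.2
  | tail _ hs ih =>
      obtain ⟨k, hk⟩ := ih
      obtain ⟨k', hk'⟩ := flip_step_lemma hs hk
      refine ⟨k' + k, ?_⟩
      have : (fun i : Fin (m + 1) => f (i + k' + k)) = fun i => f (i + (k' + k)) := by
        funext i; rw [add_assoc]
      rwa [this] at hk'

/-- If ω and ω' are torically equivalent acyclic orientations of G and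
i₁ → ⋯ → i_m is a toric directed path of ω (directed path whose closing edge i₁ → i_m
is also present), then ω' contains a toric directed path on a cyclic shift of
(i₁, …, i_m). -/
theorem stmt_16 (V : Type) [Fintype V] (G : SimpleGraph V) (r r' : V → V → Prop)
    (hor : IsOrientation G r) (hacyc : ¬ HasCycle r) (heq : ToricEquiv r r')
    (m : ℕ) (f : Fin (m + 1) → V)
    (hpath : ∀ i : Fin m, r (f i.castSucc) (f i.succ))
    (hclose : r (f 0) (f (Fin.last m))) :
    ∃ k : Fin (m + 1),
      (∀ i : Fin m, r' (f (i.castSucc + k)) (f (i.succ + k))) ∧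
      r' (f (0 + k)) (f (Fin.last m + k)) := by
  obtain ⟨k, hk⟩ := toric_key f heq ⟨hpath, hclose⟩
  exact ⟨k, hk.1, hk.2⟩
end
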